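/- Assume q is even. The map sending each conic of PG(2,q) whose extension to PG(2,q^3) contains the three points E = (1,τ,τ^2), E^q, E^{q^2} to its nucleus is a bijection onto the set of all q^2+q+1 points of PG(2,q). -/

import Mathlib

open MvPolynomial

/-- The quadratic form with coefficient vector `c` as a polynomial in three variables. -/
noncomputable def quadForm {R : Type*} [CommRing R] (c : Fin 6 → R) : MvPolynomial (Fin 3) R :=
  C (c 0) * (X 0) ^ 2 + C (c 1) * (X 1) ^ 2 + C (c 2) * (X 2) ^ 2 +
    C (c 3) * (X 0 * X 1) + C (c 4) * (X 0 * X 2) + C (c 5) * (X 1 * X 2)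

/-- `n` is a nucleus of the conic with coefficients `c`: a nonzero point at which all three
formal partial derivatives of the defining quadratic form vanish. -/
def IsNucleus {R : Type*} [CommRing R] (c : Fin 6 → R) (n : Fin 3 → R) : Prop :=
  n ≠ 0 ∧ ∀ i : Fin 3, eval n (pderiv i (quadForm c)) = 0

/-- The conic of `PG(2,q)` with coefficients `c` is special: its extension to `PG(2,q³)`
contains the three points `E`, `E^q`, `E^{q²}`. -/
def IsSpecialConic (K F : Type*) [CommRing K] [CommRing F] [Algebra K F] (q : ℕ) (τ : F)
    (c : Fin 6 → K) : Prop :=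
  eval ![1, τ, τ ^ 2] (quadForm (algebraMap K F ∘ c)) = 0 ∧
  eval ![1, τ ^ q, (τ ^ q) ^ 2] (quadForm (algebraMap K F ∘ c)) = 0 ∧
  eval ![1, τ ^ q ^ 2, (τ ^ q ^ 2) ^ 2] (quadForm (algebraMap K F ∘ c)) = 0

lemma eval_quadForm {R : Type*} [CommRing R] (c : Fin 6 → R) (x : Fin 3 → R) :
    eval x (quadForm c) = c 0 * x 0 ^ 2 + c 1 * x 1 ^ 2 + c 2 * x 2 ^ 2 +
      c 3 * (x 0 * x 1) + c 4 * (x 0 * x 2) + c 5 * (x 1 * x 2) := by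
  simp [quadForm]

lemma eval_pderiv_quadForm {R : Type*} [CommRing R] (c : Fin 6 → R) (n : Fin 3 → R) :
    (eval n (pderiv 0 (quadForm c)) = 2 * c 0 * n 0 + c 3 * n 1 + c 4 * n 2) ∧
    (eval n (pderiv 1 (quadForm c)) = 2 * c 1 * n 1 + c 3 * n 0 + c 5 * n 2) ∧
    (eval n (pderiv 2 (quadForm c)) = 2 * c 2 * n 2 + c 4 * n 0 + c 5 * n 1) := by
  refine ⟨?_, ?_, ?_⟩ <;>
  · simp [quadForm, pderiv_X, Pi.single_apply]
    ring

lemma isNucleus_iff {K : Type*} [Field K] (h2 : (2 : K) = 0) (c : Fin 6 → K) (n : Fin 3 → K) :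
    IsNucleus c n ↔ n ≠ 0 ∧ c 3 * n 1 + c 4 * n 2 = 0 ∧ c 3 * n 0 + c 5 * n 2 = 0 ∧
      c 4 * n 0 + c 5 * n 1 = 0 := by
  obtain ⟨h0, h1, h2'⟩ := eval_pderiv_quadForm c n
  constructor
  · rintro ⟨hn, hall⟩
    refine ⟨hn, ?_, ?_, ?_⟩
    · have := hall 0; rw [h0, h2] at this; linear_combination this
    · have := hall 1; rw [h1, h2] at this; linear_combination this
    · have := hall 2; rw [h2', h2] at this; linear_combination this
  · rintro ⟨hn, e1, e2, e3⟩
    refine ⟨hn, ?_⟩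
    intro i
    fin_cases i
    · show eval n (pderiv 0 (quadForm c)) = 0; rw [h0, h2]; linear_combination e1
    · show eval n (pderiv 1 (quadForm c)) = 0; rw [h1, h2]; linear_combination e2
    · show eval n (pderiv 2 (quadForm c)) = 0; rw [h2', h2]; linear_combination e3

lemma nucleus_kernel {K : Type*} [Field K] (n : Fin 3 → K) (hn : n ≠ 0)
    (c3 c4 c5 : K) (e1 : c3 * n 1 + c4 * n 2 = 0) (e2 : c3 * n 0 + c5 * n 2 = 0)
    (e3 : c4 * n 0 + c5 * n 1 = 0) (h2 : (2 : K) = 0) :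
    ∃ μ : K, c3 = μ * n 2 ∧ c4 = μ * n 1 ∧ c5 = μ * n 0 := by
  have hne : n 0 ≠ 0 ∨ n 1 ≠ 0 ∨ n 2 ≠ 0 := by
    by_contra h
    push_neg at h
    obtain ⟨a, b, d⟩ := h
    apply hn
    funext i; fin_cases i <;> assumption
  rcases hne with h | h | h
  · refine ⟨c5 / n 0, ?_, ?_, ?_⟩
    · field_simp; linear_combination e2 - c5 * n 2 * h2
    · field_simp; linear_combination e3 - c5 * n 1 * h2
    · field_simp
  · refine ⟨c4 / n 1, ?_, ?_, ?_⟩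
    · field_simp; linear_combination e1 - c4 * n 2 * h2
    · field_simp
    · field_simp; linear_combination e3 - c4 * n 0 * h2
  · refine ⟨c3 / n 2, ?_, ?_, ?_⟩
    · field_simp
    · field_simp; linear_combination e1 - c3 * n 1 * h2
    · field_simp; linear_combination e2 - c3 * n 0 * h2

theorem stmt_13 (q : ℕ) (hq : IsPrimePow q) (heven : Even q) (K F : Type*) [Field K] [Field F]
    [Algebra K F] [Fintype K] [Fintype F]
    (hK : Fintype.card K = q) (hF : Fintype.card F = q ^ 3)
    (τ : F) (hτ : (minpoly K τ).natDegree = 3) :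
    (∀ c : Fin 6 → K, c ≠ 0 → IsSpecialConic K F q τ c → ∃ n : Fin 3 → K, IsNucleus c n) ∧
    (∀ n : Fin 3 → K, n ≠ 0 →
      ∃ c : Fin 6 → K, c ≠ 0 ∧ IsSpecialConic K F q τ c ∧ IsNucleus c n) ∧
    (∀ c c' : Fin 6 → K, ∀ n n' : Fin 3 → K, c ≠ 0 → c' ≠ 0 →
      IsSpecialConic K F q τ c → IsSpecialConic K F q τ c' →
      IsNucleus c n → IsNucleus c' n' →
      (∃ lam : K, lam ≠ 0 ∧ n' = lam • n) →
      ∃ μ : K, μ ≠ 0 ∧ c' = μ • c) := by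
  classical
  obtain ⟨p, m, hp, hm, rfl⟩ := hq
  have hp2 : p = 2 := by
    rcases heven with ⟨r, hr⟩
    have h2 : (2 : ℕ) ∣ p ^ m := ⟨r, by omega⟩
    have := (Nat.prime_two.dvd_of_dvd_pow h2)
    exact ((Nat.prime_dvd_prime_iff_eq Nat.prime_two hp.nat_prime).mp this).symm
  subst hp2
  haveI hcharK : CharP K 2 := by
    have := FiniteField.cast_card_eq_zero K
    rw [hK] at this
    have hdvd : (ringChar K : ℕ) ∣ 2 ^ m :=
      (CharP.cast_eq_zero_iff K (ringChar K) (2 ^ m)).mp this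
    have hpr := CharP.char_is_prime K (ringChar K)
    have : ringChar K = 2 := ((Nat.prime_dvd_prime_iff_eq hpr Nat.prime_two).mp
      (hpr.dvd_of_dvd_pow hdvd))
    rw [← this]; exact ringChar.charP K
  haveI hcharF : CharP F 2 := by
    have := FiniteField.cast_card_eq_zero F
    rw [hF] at this
    have hdvd : (ringChar F : ℕ) ∣ (2 ^ m) ^ 3 :=
      (CharP.cast_eq_zero_iff F (ringChar F) _).mp this
    rw [← pow_mul] at hdvd
    have hpr := CharP.char_is_prime F (ringChar F)
    have : ringChar F = 2 := ((Nat.prime_dvd_prime_iff_eq hpr Nat.prime_two).mp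
      (hpr.dvd_of_dvd_pow hdvd))
    rw [← this]; exact ringChar.charP F
  have h2K : (2 : K) = 0 := by exact_mod_cast CharP.cast_eq_zero K 2
  have h2F : (2 : F) = 0 := by exact_mod_cast CharP.cast_eq_zero F 2
  set φ : F →+* F := iterateFrobenius F 2 m with hφdef
  have hφ : ∀ x : F, φ x = x ^ 2 ^ m := fun x => iterateFrobenius_def 2 m x
  have hφalg : ∀ a : K, φ (algebraMap K F a) = algebraMap K F a := by
    intro a
    rw [hφ, ← map_pow, ← hK, FiniteField.pow_card]
  have hint : IsIntegral K τ := Algebra.IsIntegral.isIntegral τ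
  have hmonic := minpoly.monic hint
  have hirr := minpoly.irreducible hint
  set M := minpoly K τ with hM
  set p0 := M.coeff 0 with hp0
  set p1 := M.coeff 1 with hp1
  set p2 := M.coeff 2 with hp2'
  have hτ3 : τ ^ 3 = algebraMap K F p0 + algebraMap K F p1 * τ + algebraMap K F p2 * τ ^ 2 := by
    have h0 : Polynomial.aeval τ M = 0 := minpoly.aeval K τ
    rw [Polynomial.aeval_eq_sum_range, hτ] at h0
    simp [Finset.sum_range_succ] at h0
    have h3 : M.coeff 3 = 1 := by
      have := hmonic.leadingCoeff
      rwa [Polynomial.leadingCoeff, hτ] at this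
    rw [h3] at h0
    simp only [Algebra.smul_def, map_one] at h0
    linear_combination -h0 + τ ^ 3 * h2F
  -- linear independence of 1, τ, τ²
  have hind : ∀ x y z : K, algebraMap K F x + algebraMap K F y * τ + algebraMap K F z * τ ^ 2 = 0
      → x = 0 ∧ y = 0 ∧ z = 0 := by
    intro x y z h
    set P : Polynomial K := Polynomial.C z * Polynomial.X ^ 2 + Polynomial.C y * Polynomial.X +
      Polynomial.C x with hP
    have haev : Polynomial.aeval τ P = 0 := by
      simp only [hP, map_add, map_mul, map_pow, Polynomial.aeval_C, Polynomial.aeval_X]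
      linear_combination h
    have hPzero : P = 0 := by
      by_contra hPne
      have hle := minpoly.degree_le_of_ne_zero K τ hPne haev
      have hdegP : P.degree ≤ 2 := Polynomial.degree_quadratic_le
      have hdegM : M.degree = 3 := by
        rw [Polynomial.degree_eq_natDegree hmonic.ne_zero, hτ]; rfl
      rw [← hM, hdegM] at hle
      have : (3 : WithBot ℕ) ≤ 2 := le_trans hle hdegP
      norm_num at this
    have hx : x = P.coeff 0 := by simp [hP]
    have hy : y = P.coeff 1 := by simp [hP]
    have hz : z = P.coeff 2 := by simp [hP]
    rw [hPzero] at hx hy hz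
    simp at hx hy hz
    exact ⟨hx, hy, hz⟩
  -- b1 ≠ 0
  have hb1 : p0 + p1 * p2 ≠ 0 := by
    intro hzero
    have hroot : M.IsRoot p2 := by
      show Polynomial.eval p2 M = 0
      rw [Polynomial.eval_eq_sum_range, hτ]
      have h3 : M.coeff 3 = 1 := by
        have := hmonic.leadingCoeff
        rwa [Polynomial.leadingCoeff, hτ] at this
      simp [Finset.sum_range_succ, h3]
      linear_combination hzero + p2 ^ 3 * h2K
    obtain ⟨g, hg⟩ := (Polynomial.dvd_iff_isRoot).mpr hroot
    rcases hirr.isUnit_or_isUnit hg with hu | hu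
    · rw [Polynomial.isUnit_iff_degree_eq_zero, Polynomial.degree_X_sub_C] at hu
      norm_num at hu
    · rw [Polynomial.isUnit_iff_degree_eq_zero] at hu
      have hdegM : M.degree = 3 := by
        rw [Polynomial.degree_eq_natDegree hmonic.ne_zero, hτ]; rfl
      rw [hg, Polynomial.degree_mul, Polynomial.degree_X_sub_C, hu] at hdegM
      norm_num at hdegM
  -- representation of eval at E in the basis 1, τ, τ²
  have hrepr : ∀ c : Fin 6 → K, eval ![1, τ, τ ^ 2] (quadForm (algebraMap K F ∘ c)) =
      algebraMap K F (c 0 + c 2 * (p0 * p2) + c 5 * p0)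
      + algebraMap K F (c 3 + c 2 * (p0 + p1 * p2) + c 5 * p1) * τ
      + algebraMap K F (c 1 + c 4 + c 2 * (p1 + p2 ^ 2) + c 5 * p2) * τ ^ 2 := by
    intro c
    rw [eval_quadForm]
    simp only [Function.comp_apply, Matrix.cons_val_zero, Matrix.cons_val_one, Matrix.head_cons,
      Matrix.cons_val_two, Matrix.tail_cons, map_add, map_mul, map_pow]
    linear_combination (algebraMap K F (c 5) + algebraMap K F (c 2) * algebraMap K F p2 +
      algebraMap K F (c 2) * τ) * hτ3
  -- Frobenius: first incidence implies the other two
  have hstep : ∀ c : Fin 6 → K, ∀ x : F,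
      eval ![1, x, x ^ 2] (quadForm (algebraMap K F ∘ c)) = 0 →
      eval ![1, x ^ 2 ^ m, (x ^ 2 ^ m) ^ 2] (quadForm (algebraMap K F ∘ c)) = 0 := by
    intro c x hx
    have h := congrArg φ hx
    rw [map_zero] at h
    rw [eval_quadForm] at hx h ⊢
    simp only [Function.comp_apply, Matrix.cons_val_zero, Matrix.cons_val_one, Matrix.head_cons,
      Matrix.cons_val_two, Matrix.tail_cons] at h ⊢
    simp only [map_add, map_mul, map_pow, map_one] at h
    simp only [hφalg, hφ] at h
    linear_combination h
  have hspecial_of : ∀ c : Fin 6 → K,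
      eval ![1, τ, τ ^ 2] (quadForm (algebraMap K F ∘ c)) = 0 →
      IsSpecialConic K F (2 ^ m) τ c := by
    intro c h1
    refine ⟨h1, hstep c τ h1, ?_⟩
    have h2 := hstep c (τ ^ 2 ^ m) (hstep c τ h1)
    rw [← pow_mul, ← pow_two] at h2
    exact h2
  -- the canonical conic with nucleus n
  set s : (Fin 3 → K) → K := fun n => (n 2 + n 0 * p1) / (p0 + p1 * p2) with hs
  set w : (Fin 3 → K) → (Fin 6 → K) := fun n =>
    ![s n * (p0 * p2) + n 0 * p0, n 1 + s n * (p1 + p2 ^ 2) + n 0 * p2, s n, n 2, n 1, n 0]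
    with hw
  have hcoeff_zero : ∀ c : Fin 6 → K,
      eval ![1, τ, τ ^ 2] (quadForm (algebraMap K F ∘ c)) = 0 →
      (c 0 + c 2 * (p0 * p2) + c 5 * p0 = 0 ∧
       c 3 + c 2 * (p0 + p1 * p2) + c 5 * p1 = 0 ∧
       c 1 + c 4 + c 2 * (p1 + p2 ^ 2) + c 5 * p2 = 0) := by
    intro c h
    rw [hrepr] at h
    exact hind _ _ _ h
  -- main determination: special conic with nucleus n is μ • w n
  have hmain : ∀ (c : Fin 6 → K) (n : Fin 3 → K),
      eval ![1, τ, τ ^ 2] (quadForm (algebraMap K F ∘ c)) = 0 → IsNucleus c n →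
      ∃ μ : K, c = μ • w n := by
    intro c n hsp hnuc
    rw [isNucleus_iff h2K] at hnuc
    obtain ⟨hn, e1, e2, e3⟩ := hnuc
    obtain ⟨μ, h3, h4, h5⟩ := nucleus_kernel n hn _ _ _ e1 e2 e3 h2K
    obtain ⟨hA, hB, hC⟩ := hcoeff_zero c hsp
    have hc2 : c 2 = μ * s n := by
      rw [hs]; field_simp
      linear_combination hB - h3 - p1 * h5 - (μ * n 2 + μ * n 0 * p1) * h2K
    refine ⟨μ, funext fun i => ?_⟩
    fin_cases i
    · show c 0 = μ * (w n 0)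
      simp only [hw, Matrix.cons_val_zero]
      linear_combination hA - (p0 * p2) * hc2 - p0 * h5 -
        (μ * (s n * (p0 * p2)) + μ * (n 0 * p0)) * h2K
    · show c 1 = μ * (w n 1)
      simp only [hw, Matrix.cons_val_one, Matrix.head_cons, Matrix.cons_val_zero]
      linear_combination hC - h4 - (p1 + p2 ^ 2) * hc2 - p2 * h5 -
        (μ * n 1 + μ * (s n * (p1 + p2 ^ 2)) + μ * (n 0 * p2)) * h2K
    · show c 2 = μ * (w n 2)
      simpa [hw] using hc2
    · show c 3 = μ * (w n 3)
      simpa [hw] using h3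
    · show c 4 = μ * (w n 4)
      simpa [hw] using h4
    · show c 5 = μ * (w n 5)
      simpa [hw] using h5
  have hwspecial : ∀ n : Fin 3 → K, n ≠ 0 → IsSpecialConic K F (2 ^ m) τ (w n) := by
    intro n hn
    apply hspecial_of
    rw [hrepr]
    have hsb : s n * (p0 + p1 * p2) = n 2 + n 0 * p1 := by
      rw [hs]; field_simp
    have hA : w n 0 + w n 2 * (p0 * p2) + w n 5 * p0 = 0 := by
      simp only [hw, Matrix.cons_val_zero]
      show s n * (p0 * p2) + n 0 * p0 + s n * (p0 * p2) + n 0 * p0 = 0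
      linear_combination (s n * (p0 * p2) + n 0 * p0) * h2K
    have hB : w n 3 + w n 2 * (p0 + p1 * p2) + w n 5 * p1 = 0 := by
      show n 2 + s n * (p0 + p1 * p2) + n 0 * p1 = 0
      linear_combination hsb + (n 2 + n 0 * p1) * h2K
    have hC : w n 1 + w n 4 + w n 2 * (p1 + p2 ^ 2) + w n 5 * p2 = 0 := by
      show n 1 + s n * (p1 + p2 ^ 2) + n 0 * p2 + n 1 + s n * (p1 + p2 ^ 2) + n 0 * p2 = 0
      linear_combination (n 1 + s n * (p1 + p2 ^ 2) + n 0 * p2) * h2K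
    rw [hA, hB, hC]
    simp
  have hwnucleus : ∀ n : Fin 3 → K, n ≠ 0 → IsNucleus (w n) n := by
    intro n hn
    rw [isNucleus_iff h2K]
    refine ⟨hn, ?_, ?_, ?_⟩
    · show n 2 * n 1 + n 1 * n 2 = 0
      linear_combination n 1 * n 2 * h2K
    · show n 2 * n 0 + n 0 * n 2 = 0
      linear_combination n 0 * n 2 * h2K
    · show n 1 * n 0 + n 0 * n 1 = 0
      linear_combination n 0 * n 1 * h2K
  have hwne : ∀ n : Fin 3 → K, n ≠ 0 → w n ≠ 0 := by
    intro n hn hc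
    apply hn
    funext i
    fin_cases i
    · have := congrFun hc 5; simpa [hw] using this
    · have := congrFun hc 4; simpa [hw] using this
    · have := congrFun hc 3; simpa [hw] using this
  refine ⟨?_, ?_, ?_⟩
  -- Part 1: every special conic has a nucleus
  · intro c hc hsp
    by_cases h345 : c 3 = 0 ∧ c 4 = 0 ∧ c 5 = 0
    · refine ⟨![1, 0, 0], ?_⟩
      rw [isNucleus_iff h2K]
      obtain ⟨h3, h4, h5⟩ := h345
      refine ⟨?_, ?_, ?_, ?_⟩
      · intro h
        have := congrFun h 0
        simp at this
      · show c 3 * 0 + c 4 * 0 = 0; ring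
      · show c 3 * 1 + c 5 * 0 = 0; rw [h3]; ring
      · show c 4 * 1 + c 5 * 0 = 0; rw [h4]; ring
    · refine ⟨![c 5, c 4, c 3], ?_⟩
      rw [isNucleus_iff h2K]
      refine ⟨?_, ?_, ?_, ?_⟩
      · intro h
        apply h345
        refine ⟨?_, ?_, ?_⟩
        · have := congrFun h 2; simpa using this
        · have := congrFun h 1; simpa using this
        · have := congrFun h 0; simpa using this
      · show c 3 * c 4 + c 4 * c 3 = 0
        linear_combination c 3 * c 4 * h2K
      · show c 3 * c 5 + c 5 * c 3 = 0
        linear_combination c 3 * c 5 * h2K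
      · show c 4 * c 5 + c 5 * c 4 = 0
        linear_combination c 4 * c 5 * h2K
  -- Part 2: surjectivity
  · intro n hn
    exact ⟨w n, hwne n hn, hwspecial n hn, hwnucleus n hn⟩
  -- Part 3: injectivity
  · rintro c c' n n' hc hc' hsp hsp' hnuc hnuc' ⟨lam, hlam, rfl⟩
    obtain ⟨μ, hμ⟩ := hmain c n hsp.1 hnuc
    have hn : n ≠ 0 := hnuc.1
    have hwlam : w (lam • n) = lam • w n := by
      have hslam : s (lam • n) = lam * s n := by
        simp only [hs, Pi.smul_apply, smul_eq_mul]
        field_simp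
      funext i
      fin_cases i
      · show s (lam • n) * (p0 * p2) + (lam • n) 0 * p0 =
          lam * (s n * (p0 * p2) + n 0 * p0)
        simp only [Pi.smul_apply, smul_eq_mul, hslam]; ring
      · show (lam • n) 1 + s (lam • n) * (p1 + p2 ^ 2) + (lam • n) 0 * p2 =
          lam * (n 1 + s n * (p1 + p2 ^ 2) + n 0 * p2)
        simp only [Pi.smul_apply, smul_eq_mul, hslam]; ring
      · show s (lam • n) = lam * s n
        exact hslam
      · show (lam • n) 2 = lam * n 2
        simp
      · show (lam • n) 1 = lam * n 1
        simp
      · show (lam • n) 0 = lam * n 0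
        simp
    obtain ⟨μ', hμ'⟩ := hmain c' (lam • n) hsp'.1 hnuc'
    rw [hwlam] at hμ'
    have hμne : μ ≠ 0 := by
      intro h
      apply hc
      rw [hμ, h, zero_smul]
    have hμ'lam : μ' * lam ≠ 0 := by
      intro h
      apply hc'
      rw [hμ']
      funext i
      simp only [Pi.smul_apply, smul_eq_mul, Pi.zero_apply]
      rw [← mul_assoc, h, zero_mul]
    refine ⟨μ' * lam / μ, div_ne_zero hμ'lam hμne, ?_⟩
    funext i
    rw [hμ', hμ]
    simp only [Pi.smul_apply, smul_eq_mul]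
    field_simp
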